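/- Let N = 2n, let F ∈ Matrix (Fin N) (Fin N) ℝ be the standard semitangential structure (F e_k = e_{n+k} for 0 ≤ k < n, F e_{n+k} = 0), and let Γ^α_{λβ} : U → ℝ be continuous connection coefficients on an open set U ⊆ ℝ^N that are pure toward F (∑_λ Γ^α_{σλ} F^λ_β = ∑_ν Γ^ν_{σβ} F^α_ν on U). Fix c ∈ ℝ and a twice differentiable curve u ↦ z(u) ∈ ℝ^n, and let β(u) = (z(u), c·z'(u)) ∈ ℝ^{2n} be the corresponding u-line of the holomorphic surface S^H, assumed to lie in U and satisfy the geodesic equation β̈^α + ∑ Γ^α_{λβ}(β) β̇^λ β̇^β = 0. Then the vector field γ̇ := F β̇ along β (the velocity of the v-lines) is parallel along β: d/du (F β̇)^α + ∑_{λ,ν} Γ^α_{λν}(β) β̇^λ (F β̇)^ν = 0, and consequently β is a PH-curve for the connection Γ. -/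

import Mathlib

/-- Let `F` be the standard semitangential structure on `ℝ^{2n}`
and `Γ` connection coefficients pure toward `F`.  If the `u`-line
`β(u) = (z(u), c·z'(u))` of the holomorphic surface `S^H` is a geodesic, then the
velocity field `γ̇ = F β̇` of the `v`-lines is parallel along `β`, and consequently
`β` is a PH-curve for `Γ`. -/
theorem stmt_15 (n : ℕ) {U : Set (Fin (2 * n) → ℝ)} (hUopen : IsOpen U)
    (F : Matrix (Fin (2 * n)) (Fin (2 * n)) ℝ)
    (hF : ∀ i j, F i j = if (i : ℕ) = (j : ℕ) + n ∧ (j : ℕ) < n then 1 else 0)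
    (Γ : (Fin (2 * n) → ℝ) → Fin (2 * n) → Fin (2 * n) → Fin (2 * n) → ℝ)
    (hΓcont : ∀ α μ β, ContinuousOn (fun z => Γ z α μ β) U)
    (hpure : ∀ z ∈ U, ∀ σ α β,
      ∑ μ, Γ z α σ μ * F μ β = ∑ ν, Γ z ν σ β * F α ν)
    (c : ℝ) (z : ℝ → Fin n → ℝ)
    (hz1 : Differentiable ℝ z) (hz2 : Differentiable ℝ (deriv z))
    (β : ℝ → Fin (2 * n) → ℝ)
    (hβ : ∀ (u : ℝ) (i : Fin (2 * n)), β u i =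
      if h : (i : ℕ) < n then z u ⟨i, h⟩
      else c * deriv (fun s => z s ⟨(i : ℕ) - n, by omega⟩) u)
    (hmem : ∀ u : ℝ, β u ∈ U)
    (hgeo : ∀ (u : ℝ) (α : Fin (2 * n)), deriv (fun s => deriv β s α) u
      + ∑ μ, ∑ ν, Γ (β u) α μ ν * deriv β u μ * deriv β u ν = 0) :
    (∀ (u : ℝ) (α : Fin (2 * n)),
      deriv (fun s => F.mulVec (deriv β s) α) u
        + ∑ μ, ∑ ν, Γ (β u) α μ ν * deriv β u μ * F.mulVec (deriv β u) ν = 0) ∧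
    (∃ a b : ℝ → ℝ, ∀ (u : ℝ) (α : Fin (2 * n)),
      deriv (fun s => deriv β s α) u
        + ∑ μ, ∑ ν, Γ (β u) α μ ν * deriv β u μ * deriv β u ν
      = a u * deriv β u α + b u * F.mulVec (deriv β u) α) := by
  -- derivative of a component of z
  have hzcomp : ∀ (j : Fin n) (s : ℝ),
      deriv (fun t => z t j) s = deriv z s j := fun j s =>
    (hasDerivAt_pi.mp (hz1 s).hasDerivAt j).deriv
  -- components of β as explicit functions
  have h1 : ∀ (ν : Fin (2 * n)) (hν : (ν : ℕ) < n),
      (fun s => β s ν) = fun s => z s ⟨ν, hν⟩ := by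
    intro ν hν; funext s; rw [hβ s ν, dif_pos hν]
  have h2 : ∀ (ν : Fin (2 * n)) (hν : ¬ (ν : ℕ) < n),
      (fun s => β s ν) = fun s => c * deriv z s ⟨(ν : ℕ) - n, by omega⟩ := by
    intro ν hν; funext s; rw [hβ s ν, dif_neg hν]
    congr 1
    exact hzcomp _ s
  -- differentiability of components of β
  have hβdiff : Differentiable ℝ β := by
    rw [differentiable_pi]
    intro ν
    by_cases hν : (ν : ℕ) < n
    · rw [h1 ν hν]; exact differentiable_pi.mp hz1 _
    · rw [h2 ν hν]
      exact (differentiable_pi.mp hz2 _).const_mul c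
  -- components of deriv β
  have hderivβ : ∀ (u : ℝ) (ν : Fin (2 * n)),
      deriv β u ν = deriv (fun s => β s ν) u := fun u ν =>
    ((hasDerivAt_pi.mp (hβdiff u).hasDerivAt ν).deriv).symm
  -- for lower components, deriv β · ν = deriv z · ⟨ν⟩
  have hcomp : ∀ (ν : Fin (2 * n)) (hν : (ν : ℕ) < n),
      (fun s => deriv β s ν) = fun s => deriv z s ⟨ν, hν⟩ := by
    intro ν hν; funext s
    rw [hderivβ s ν, h1 ν hν, hzcomp]
  constructor
  · intro u α
    -- rewrite F.mulVec (deriv β s) α as an explicit finite sum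
    have hfun : ∀ v : Fin (2 * n) → ℝ, F.mulVec v α
        = ∑ ν : Fin (2 * n), (if (α : ℕ) = (ν : ℕ) + n ∧ (ν : ℕ) < n then v ν else 0) := by
      intro v
      simp only [Matrix.mulVec, dotProduct, hF]
      refine Finset.sum_congr rfl fun ν _ => ?_
      split_ifs <;> simp
    have hfun' : (fun s => F.mulVec (deriv β s) α)
        = fun s => ∑ ν : Fin (2 * n), (if (α : ℕ) = (ν : ℕ) + n ∧ (ν : ℕ) < n
            then deriv β s ν else 0) := by
      funext s; exact hfun _
    rw [hfun']
    -- differentiate the sum termwise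
    have hterm : ∀ ν : Fin (2 * n),
        DifferentiableAt ℝ (fun s => if (α : ℕ) = (ν : ℕ) + n ∧ (ν : ℕ) < n
          then deriv β s ν else 0) u := by
      intro ν
      by_cases hc : (α : ℕ) = (ν : ℕ) + n ∧ (ν : ℕ) < n
      · simp only [if_pos hc]
        rw [hcomp ν hc.2]
        exact (differentiable_pi.mp hz2 _) u
      · simp only [if_neg hc]; exact differentiableAt_const 0
    have hds : deriv (fun s => ∑ ν : Fin (2 * n), (if (α : ℕ) = (ν : ℕ) + n ∧ (ν : ℕ) < n
          then deriv β s ν else 0)) u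
        = ∑ ν : Fin (2 * n), (if (α : ℕ) = (ν : ℕ) + n ∧ (ν : ℕ) < n
            then deriv (fun s => deriv β s ν) u else 0) := by
      rw [deriv_fun_sum (fun ν _ => hterm ν)]
      refine Finset.sum_congr rfl fun ν _ => ?_
      by_cases hc : (α : ℕ) = (ν : ℕ) + n ∧ (ν : ℕ) < n
      · simp only [if_pos hc]
      · simp only [if_neg hc, deriv_const]
    rw [hds]
    -- use geodesic equation
    have hgeo' : ∀ ν : Fin (2 * n), deriv (fun s => deriv β s ν) u
        = -(∑ μ : Fin (2 * n), ∑ l : Fin (2 * n), Γ (β u) ν μ l * deriv β u μ * deriv β u l) := by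
      intro ν; linarith [hgeo u ν]
    -- algebra with purity
    set b := deriv β u with hb
    set g := Γ (β u) with hg
    have hp := hpure (β u) (hmem u)
    have key : (∑ μ : Fin (2 * n), ∑ ν : Fin (2 * n), g α μ ν * b μ * F.mulVec b ν)
        = ∑ ρ : Fin (2 * n), F α ρ * (∑ μ : Fin (2 * n), ∑ l : Fin (2 * n), g ρ μ l * b μ * b l) := by
      have step1 : ∀ μ, (∑ ν : Fin (2 * n), g α μ ν * b μ * F.mulVec b ν)
          = ∑ l : Fin (2 * n), (∑ ρ : Fin (2 * n), g ρ μ l * F α ρ) * (b μ * b l) := by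
        intro μ
        have : (∑ ν : Fin (2 * n), g α μ ν * b μ * F.mulVec b ν)
            = ∑ l : Fin (2 * n), (∑ ν : Fin (2 * n), g α μ ν * F ν l) * (b μ * b l) := by
          simp only [Matrix.mulVec, dotProduct, Finset.mul_sum, Finset.sum_mul]
          rw [Finset.sum_comm]
          refine Finset.sum_congr rfl fun l _ => Finset.sum_congr rfl fun ν _ => ?_
          ring
        rw [this]
        refine Finset.sum_congr rfl fun l _ => ?_
        rw [hp μ α l]
      calc (∑ μ : Fin (2 * n), ∑ ν : Fin (2 * n), g α μ ν * b μ * F.mulVec b ν)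
          = ∑ μ : Fin (2 * n), ∑ l : Fin (2 * n), (∑ ρ : Fin (2 * n), g ρ μ l * F α ρ) * (b μ * b l) := by
            exact Finset.sum_congr rfl fun μ _ => step1 μ
        _ = ∑ μ : Fin (2 * n), ∑ ρ : Fin (2 * n), ∑ l : Fin (2 * n),
              (g ρ μ l * F α ρ) * (b μ * b l) := by
            simp only [Finset.sum_mul]
            exact Finset.sum_congr rfl fun μ _ => Finset.sum_comm
        _ = ∑ ρ : Fin (2 * n), F α ρ * (∑ μ : Fin (2 * n), ∑ l : Fin (2 * n), g ρ μ l * b μ * b l) := by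
            rw [Finset.sum_comm]
            simp only [Finset.mul_sum]
            refine Finset.sum_congr rfl fun ρ _ => Finset.sum_congr rfl fun μ _ =>
              Finset.sum_congr rfl fun l _ => ?_
            ring
      done
    rw [key]
    have : (∑ ν : Fin (2 * n), (if (α : ℕ) = (ν : ℕ) + n ∧ (ν : ℕ) < n
            then deriv (fun s => deriv β s ν) u else 0))
        = -(∑ ρ : Fin (2 * n), F α ρ * (∑ μ : Fin (2 * n), ∑ l : Fin (2 * n), g ρ μ l * b μ * b l)) := by
      rw [← Finset.sum_neg_distrib]
      refine Finset.sum_congr rfl fun ν _ => ?_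
      rw [hF]
      by_cases hc : (α : ℕ) = (ν : ℕ) + n ∧ (ν : ℕ) < n
      · rw [if_pos hc, if_pos hc, hgeo' ν, one_mul]
      · rw [if_neg hc, if_neg hc, zero_mul, neg_zero]
    rw [this]
    ring
  · refine ⟨fun _ => 0, fun _ => 0, fun u α => ?_⟩
    rw [zero_mul, zero_mul, add_zero]
    exact hgeo u α
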